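/- For every t ∈ k' with v(t) ≥ 0 there exists h ∈ GL₅(k'[[ε]]) such that every ε-coefficient of every entry of the matrix h·x_t·σ(h)^{-1} − b₂ has strictly positive valuation v. Here x_t is the 5×5 matrix with rows (1,0,0,0,0), (0,0,1,t,0), (0,ε,0,0,0), (0,0,0,0,1), (0,0,0,ε,0), and b₂ is the 5×5 matrix with rows (0,1,0,0,0), (0,0,1,0,0), (ε,0,0,0,0), (0,0,0,0,1), (0,0,0,ε,0). -/

import Mathlib

open scoped MatrixGroups

theorem Statement5.mat5_eq {α : Type*} {a00 a01 a02 a03 a04 a10 a11 a12 a13 a14 a20 a21 a22 a23 a24 a30 a31 a32 a33 a34 a40 a41 a42 a43 a44 b00 b01 b02 b03 b04 b10 b11 b12 b13 b14 b20 b21 b22 b23 b24 b30 b31 b32 b33 b34 b40 b41 b42 b43 b44 : α}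
    (h00 : a00 = b00) (h01 : a01 = b01) (h02 : a02 = b02) (h03 : a03 = b03) (h04 : a04 = b04) (h10 : a10 = b10) (h11 : a11 = b11) (h12 : a12 = b12) (h13 : a13 = b13) (h14 : a14 = b14) (h20 : a20 = b20) (h21 : a21 = b21) (h22 : a22 = b22) (h23 : a23 = b23) (h24 : a24 = b24) (h30 : a30 = b30) (h31 : a31 = b31) (h32 : a32 = b32) (h33 : a33 = b33) (h34 : a34 = b34) (h40 : a40 = b40) (h41 : a41 = b41) (h42 : a42 = b42) (h43 : a43 = b43) (h44 : a44 = b44) :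
    (!![a00, a01, a02, a03, a04;
     a10, a11, a12, a13, a14;
     a20, a21, a22, a23, a24;
     a30, a31, a32, a33, a34;
     a40, a41, a42, a43, a44] : Matrix (Fin 5) (Fin 5) α) = !![b00, b01, b02, b03, b04;
     b10, b11, b12, b13, b14;
     b20, b21, b22, b23, b24;
     b30, b31, b32, b33, b34;
     b40, b41, b42, b43, b44] := by
  subst_vars; rfl

theorem Statement5.map_fin_five {R S : Type*} [Semiring R] [Semiring S] (f : R →+* S)
    (a00 a01 a02 a03 a04 a10 a11 a12 a13 a14 a20 a21 a22 a23 a24 a30 a31 a32 a33 a34 a40 a41 a42 a43 a44 : R) :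
    (!![a00, a01, a02, a03, a04;
     a10, a11, a12, a13, a14;
     a20, a21, a22, a23, a24;
     a30, a31, a32, a33, a34;
     a40, a41, a42, a43, a44] : Matrix (Fin 5) (Fin 5) R).map f = !![f a00, f a01, f a02, f a03, f a04;
     f a10, f a11, f a12, f a13, f a14;
     f a20, f a21, f a22, f a23, f a24;
     f a30, f a31, f a32, f a33, f a34;
     f a40, f a41, f a42, f a43, f a44] := by
  ext i j
  fin_cases i <;> fin_cases j <;> rfl

theorem Statement5.sub_fin_five {α : Type*} [SubtractionMonoid α]
    (a00 a01 a02 a03 a04 a10 a11 a12 a13 a14 a20 a21 a22 a23 a24 a30 a31 a32 a33 a34 a40 a41 a42 a43 a44 b00 b01 b02 b03 b04 b10 b11 b12 b13 b14 b20 b21 b22 b23 b24 b30 b31 b32 b33 b34 b40 b41 b42 b43 b44 : α) :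
    (!![a00, a01, a02, a03, a04;
     a10, a11, a12, a13, a14;
     a20, a21, a22, a23, a24;
     a30, a31, a32, a33, a34;
     a40, a41, a42, a43, a44] : Matrix (Fin 5) (Fin 5) α) - !![b00, b01, b02, b03, b04;
     b10, b11, b12, b13, b14;
     b20, b21, b22, b23, b24;
     b30, b31, b32, b33, b34;
     b40, b41, b42, b43, b44] =
    !![(a00 - b00), (a01 - b01), (a02 - b02), (a03 - b03), (a04 - b04);
     (a10 - b10), (a11 - b11), (a12 - b12), (a13 - b13), (a14 - b14);
     (a20 - b20), (a21 - b21), (a22 - b22), (a23 - b23), (a24 - b24);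
     (a30 - b30), (a31 - b31), (a32 - b32), (a33 - b33), (a34 - b34);
     (a40 - b40), (a41 - b41), (a42 - b42), (a43 - b43), (a44 - b44)] := by
  ext i j
  fin_cases i <;> fin_cases j <;> simp [Matrix.sub_apply]

set_option maxHeartbeats 1000000 in
theorem Statement5.mul_fin_five {α : Type*} [NonUnitalNonAssocSemiring α]
    (a00 a01 a02 a03 a04 a10 a11 a12 a13 a14 a20 a21 a22 a23 a24 a30 a31 a32 a33 a34 a40 a41 a42 a43 a44 b00 b01 b02 b03 b04 b10 b11 b12 b13 b14 b20 b21 b22 b23 b24 b30 b31 b32 b33 b34 b40 b41 b42 b43 b44 : α) :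
    (!![a00, a01, a02, a03, a04;
     a10, a11, a12, a13, a14;
     a20, a21, a22, a23, a24;
     a30, a31, a32, a33, a34;
     a40, a41, a42, a43, a44] : Matrix (Fin 5) (Fin 5) α) * !![b00, b01, b02, b03, b04;
     b10, b11, b12, b13, b14;
     b20, b21, b22, b23, b24;
     b30, b31, b32, b33, b34;
     b40, b41, b42, b43, b44] =
    !![a00 * b00 + a01 * b10 + a02 * b20 + a03 * b30 + a04 * b40, a00 * b01 + a01 * b11 + a02 * b21 + a03 * b31 + a04 * b41, a00 * b02 + a01 * b12 + a02 * b22 + a03 * b32 + a04 * b42, a00 * b03 + a01 * b13 + a02 * b23 + a03 * b33 + a04 * b43, a00 * b04 + a01 * b14 + a02 * b24 + a03 * b34 + a04 * b44;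
     a10 * b00 + a11 * b10 + a12 * b20 + a13 * b30 + a14 * b40, a10 * b01 + a11 * b11 + a12 * b21 + a13 * b31 + a14 * b41, a10 * b02 + a11 * b12 + a12 * b22 + a13 * b32 + a14 * b42, a10 * b03 + a11 * b13 + a12 * b23 + a13 * b33 + a14 * b43, a10 * b04 + a11 * b14 + a12 * b24 + a13 * b34 + a14 * b44;
     a20 * b00 + a21 * b10 + a22 * b20 + a23 * b30 + a24 * b40, a20 * b01 + a21 * b11 + a22 * b21 + a23 * b31 + a24 * b41, a20 * b02 + a21 * b12 + a22 * b22 + a23 * b32 + a24 * b42, a20 * b03 + a21 * b13 + a22 * b23 + a23 * b33 + a24 * b43, a20 * b04 + a21 * b14 + a22 * b24 + a23 * b34 + a24 * b44;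
     a30 * b00 + a31 * b10 + a32 * b20 + a33 * b30 + a34 * b40, a30 * b01 + a31 * b11 + a32 * b21 + a33 * b31 + a34 * b41, a30 * b02 + a31 * b12 + a32 * b22 + a33 * b32 + a34 * b42, a30 * b03 + a31 * b13 + a32 * b23 + a33 * b33 + a34 * b43, a30 * b04 + a31 * b14 + a32 * b24 + a33 * b34 + a34 * b44;
     a40 * b00 + a41 * b10 + a42 * b20 + a43 * b30 + a44 * b40, a40 * b01 + a41 * b11 + a42 * b21 + a43 * b31 + a44 * b41, a40 * b02 + a41 * b12 + a42 * b22 + a43 * b32 + a44 * b42, a40 * b03 + a41 * b13 + a42 * b23 + a43 * b33 + a44 * b43, a40 * b04 + a41 * b14 + a42 * b24 + a43 * b34 + a44 * b44] := by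
  ext i j
  fin_cases i <;> fin_cases j <;>
    simp [Matrix.mul_apply, Fin.sum_univ_succ, ← add_assoc]

open PowerSeries in
/-- The basis matrix `F` whose columns are the vectors `f1,...,f5`. -/
noncomputable def Statement5.Fm {k' : Type*} [Field k'] (q : ℕ)
    (xs as bs cs ds gs : ℕ → k') : Matrix (Fin 5) (Fin 5) (PowerSeries k') :=
  !![PowerSeries.mk fun n => xs n ^ (q*q), PowerSeries.mk fun n => xs n ^ q,
       PowerSeries.mk fun n => xs n, PowerSeries.mk fun n => gs n ^ q,
       PowerSeries.mk fun n => gs n;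
     PowerSeries.X * PowerSeries.mk fun n => as n ^ (q*q), PowerSeries.mk fun n => bs n ^ q,
       PowerSeries.mk fun n => as n, PowerSeries.mk fun n => ds n ^ q,
       PowerSeries.mk fun n => cs n;
     PowerSeries.X * PowerSeries.mk fun n => bs n ^ (q*q),
       PowerSeries.X * PowerSeries.mk fun n => as n ^ q, PowerSeries.mk fun n => bs n,
       PowerSeries.X * PowerSeries.mk fun n => cs n ^ q, PowerSeries.mk fun n => ds n;
     0, 0, 0, 1, 0;
     0, 0, 0, 0, 1]

/-- The perturbed target matrix `b2 + D`. -/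
noncomputable def Statement5.Bp {k' : Type*} [Field k'] (pi T0 : k') :
    Matrix (Fin 5) (Fin 5) (PowerSeries k') :=
  !![PowerSeries.C (R := k') pi, 1, 0, 0, 0;
     0, 0, 1, PowerSeries.C (R := k') T0, 0;
     PowerSeries.X, 0, 0, 0, 0;
     0, 0, 0, 0, 1;
     0, 0, 0, PowerSeries.X, 0]

set_option maxHeartbeats 2000000 in
set_option synthInstance.maxHeartbeats 1000000 in
theorem Statement5.keyid {k' : Type*} [Field k'] (q : ℕ) (σ : k' →+* k')
    (hσ : ∀ a : k', σ a = a ^ q)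
    (π t T0 : k') (xs as bs cs ds gs : ℕ → k')
    (hx0eq : xs 0 ^ (q*q*q) = π * xs 0 ^ (q*q))
    (hxsS : ∀ n, xs (n+1) ^ (q*q*q) = π * xs (n+1) ^ (q*q) + xs n)
    (hb0eq : π * bs 0 ^ (q*q) + bs 0 = 0)
    (hBrec : ∀ n, π * bs (n+1) ^ (q*q) + bs (n+1) = as n ^ (q*q*q))
    (hABrec : ∀ n, π * as n ^ (q*q) + as n = bs n ^ (q*q*q))
    (hg0 : gs 0 ^ (q*q) = T0 * xs 0 ^ q)
    (hgS : ∀ n, gs (n+1) ^ (q*q) = T0 * xs (n+1) ^ q + gs n)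
    (hc0 : t = T0 * bs 0 ^ q)
    (hcs : ∀ n, cs n ^ (q*q) = cs n + T0 * bs (n+1) ^ q)
    (hds : ∀ n, ds n ^ (q*q) = ds n + T0 * as n ^ q) :
    (!![1, 0, 0, 0, 0;
        0, 0, 1, PowerSeries.C (R := k') t, 0;
        0, PowerSeries.X, 0, 0, 0;
        0, 0, 0, 0, 1;
        0, 0, 0, PowerSeries.X, 0] : Matrix (Fin 5) (Fin 5) (PowerSeries k')) *
      (Statement5.Fm q xs as bs cs ds gs).map (PowerSeries.map σ) =
      Statement5.Fm q xs as bs cs ds gs * Statement5.Bp π T0 := by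
  have hmapmk : ∀ f : ℕ → k',
      PowerSeries.map σ (PowerSeries.mk f) = PowerSeries.mk fun n => f n ^ q := by
    intro f
    ext n
    simp [PowerSeries.coeff_map, hσ]
  have hpp : ∀ (f : ℕ → k') (m l : ℕ),
      (PowerSeries.mk fun n => (f n ^ m) ^ l) = PowerSeries.mk fun n => f n ^ (m * l) := by
    intro f m l
    ext n
    simp [pow_mul]
  have hL1 : (PowerSeries.mk fun n => xs n ^ (q*q*q)) =
      PowerSeries.C (R := k') π * PowerSeries.mk (fun n => xs n ^ (q*q)) +
        PowerSeries.X * PowerSeries.mk fun n => xs n := by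
    ext n
    cases n with
    | zero => simpa using hx0eq
    | succ n =>
        simpa [PowerSeries.coeff_C_mul, PowerSeries.coeff_succ_X_mul] using hxsS n
  have hL2 : (PowerSeries.mk fun n => bs n ^ (q*q*q)) =
      PowerSeries.C (R := k') π * PowerSeries.mk (fun n => as n ^ (q*q)) +
        PowerSeries.mk fun n => as n := by
    ext n
    simpa [PowerSeries.coeff_C_mul] using (hABrec n).symm
  have hL3 : PowerSeries.X * (PowerSeries.mk fun n => as n ^ (q*q*q)) =
      PowerSeries.C (R := k') π * PowerSeries.mk (fun n => bs n ^ (q*q)) +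
        PowerSeries.mk fun n => bs n := by
    ext n
    cases n with
    | zero => simpa using hb0eq.symm
    | succ n =>
        simpa [PowerSeries.coeff_C_mul, PowerSeries.coeff_succ_X_mul] using (hBrec n).symm
  have hL4 : (PowerSeries.mk fun n => gs n ^ (q*q)) =
      PowerSeries.C (R := k') T0 * PowerSeries.mk (fun n => xs n ^ q) +
        PowerSeries.X * PowerSeries.mk fun n => gs n := by
    ext n
    cases n with
    | zero => simpa using hg0
    | succ n =>
        simpa [PowerSeries.coeff_C_mul, PowerSeries.coeff_succ_X_mul] using hgS n
  have hL5 : PowerSeries.X * (PowerSeries.mk fun n => cs n ^ (q*q)) + PowerSeries.C (R := k') t =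
      PowerSeries.C (R := k') T0 * PowerSeries.mk (fun n => bs n ^ q) +
        PowerSeries.X * PowerSeries.mk fun n => cs n := by
    ext n
    cases n with
    | zero => simpa [PowerSeries.coeff_C_mul] using hc0
    | succ n =>
        simp [PowerSeries.coeff_C_mul, PowerSeries.coeff_succ_X_mul, PowerSeries.coeff_C]
        linear_combination hcs n
  have hL6 : (PowerSeries.mk fun n => ds n ^ (q*q)) =
      PowerSeries.C (R := k') T0 * PowerSeries.mk (fun n => as n ^ q) +
        PowerSeries.mk fun n => ds n := by
    ext n
    simp [PowerSeries.coeff_C_mul]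
    linear_combination hds n
  simp only [Statement5.Fm, Statement5.Bp]
  rw [Statement5.map_fin_five, Statement5.mul_fin_five, Statement5.mul_fin_five]
  apply Statement5.mat5_eq <;>
    simp only [map_mul, PowerSeries.map_X, map_zero, map_one, hmapmk, hpp, zero_mul, mul_zero,
      one_mul, mul_one, add_zero, zero_add] <;>
    first
      | rfl
      | linear_combination hL1
      | linear_combination hL4
      | linear_combination hL5
      | linear_combination PowerSeries.X * hL2
      | linear_combination PowerSeries.X * hL3
      | linear_combination PowerSeries.X * hL6

set_option maxHeartbeats 1000000 in
theorem Statement5.detunit {k' : Type*} [Field k'] (q : ℕ)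
    (xs as bs cs ds gs : ℕ → k') (hx : xs 0 ≠ 0) (hb : bs 0 ≠ 0) :
    IsUnit (Statement5.Fm q xs as bs cs ds gs) := by
  rw [Matrix.isUnit_iff_isUnit_det, PowerSeries.isUnit_iff_constantCoeff, RingHom.map_det, RingHom.mapMatrix_apply]
  have h1 : (Statement5.Fm q xs as bs cs ds gs).map (PowerSeries.constantCoeff (R := k')) =
      !![xs 0 ^ (q*q), xs 0 ^ q, xs 0, gs 0 ^ q, gs 0;
         0, bs 0 ^ q, as 0, ds 0 ^ q, cs 0;
         0, 0, bs 0, 0, ds 0;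
         0, 0, 0, 1, 0;
         0, 0, 0, 0, 1] := by
    simp only [Statement5.Fm]
    rw [Statement5.map_fin_five]
    apply Statement5.mat5_eq <;>
      simp [PowerSeries.constantCoeff_mk, PowerSeries.constantCoeff_X]
  rw [h1]
  have htri : (!![xs 0 ^ (q*q), xs 0 ^ q, xs 0, gs 0 ^ q, gs 0;
         0, bs 0 ^ q, as 0, ds 0 ^ q, cs 0;
         0, 0, bs 0, 0, ds 0;
         0, 0, 0, 1, 0;
         0, 0, 0, 0, 1] : Matrix (Fin 5) (Fin 5) k').BlockTriangular id := by
    intro i j hij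
    fin_cases i <;> fin_cases j <;> first | rfl | exact absurd hij (by decide)
  rw [Matrix.det_of_upperTriangular htri, Fin.prod_univ_five]
  simp only [Matrix.cons_val', Matrix.cons_val_zero, Matrix.cons_val_one, Matrix.head_cons,
    Matrix.cons_val_two, Matrix.cons_val_three, Matrix.cons_val_four, Matrix.cons_val_succ,
    Matrix.head_fin_const, Matrix.empty_val', Matrix.cons_val_fin_one, Matrix.vecTail, Matrix.vecHead, Function.comp,
    Matrix.of_apply, mul_one]
  exact (mul_ne_zero (mul_ne_zero (pow_ne_zero _ hx) (pow_ne_zero _ hb)) hb).isUnit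

set_option synthInstance.maxHeartbeats 1000000 in
theorem Statement5.glue {k' : Type*} [Field k'] (v : k' → WithTop ℚ) (σ : k' →+* k') (t : k')
    (F B' : Matrix (Fin 5) (Fin 5) (PowerSeries k'))
    (u : (Matrix (Fin 5) (Fin 5) (PowerSeries k'))ˣ)
    (hu : (u : Matrix (Fin 5) (Fin 5) (PowerSeries k')) = F)
    (hkey : (!![1, 0, 0, 0, 0;
                0, 0, 1, PowerSeries.C (R := k') t, 0;
                0, PowerSeries.X, 0, 0, 0;
                0, 0, 0, 0, 1;
                0, 0, 0, PowerSeries.X, 0] : Matrix (Fin 5) (Fin 5) (PowerSeries k')) *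
        F.map (PowerSeries.map σ) = F * B')
    (hvals : ∀ i j : Fin 5, ∀ m : ℕ, 0 < v (PowerSeries.coeff (R := k') m ((B' -
        (!![0, 1, 0, 0, 0;
            0, 0, 1, 0, 0;
            PowerSeries.X, 0, 0, 0, 0;
            0, 0, 0, 0, 1;
            0, 0, 0, PowerSeries.X, 0] :
          Matrix (Fin 5) (Fin 5) (PowerSeries k'))) i j))) :
    ∃ h : GL (Fin 5) (PowerSeries k'),
      ∀ i j : Fin 5, ∀ m : ℕ,
        0 < v (PowerSeries.coeff (R := k') m
          (((h : Matrix (Fin 5) (Fin 5) (PowerSeries k')) *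
            (!![1, 0, 0, 0, 0;
                0, 0, 1, PowerSeries.C (R := k') t, 0;
                0, PowerSeries.X, 0, 0, 0;
                0, 0, 0, 0, 1;
                0, 0, 0, PowerSeries.X, 0] : Matrix (Fin 5) (Fin 5) (PowerSeries k')) *
            (((Units.map (RingHom.mapMatrix (PowerSeries.map σ)).toMonoidHom h)⁻¹ :
                GL (Fin 5) (PowerSeries k')) : Matrix (Fin 5) (Fin 5) (PowerSeries k')) -
            (!![0, 1, 0, 0, 0;
                0, 0, 1, 0, 0;
                PowerSeries.X, 0, 0, 0, 0;
                0, 0, 0, 0, 1;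
                0, 0, 0, PowerSeries.X, 0] : Matrix (Fin 5) (Fin 5) (PowerSeries k'))) i j)) := by
  refine ⟨u⁻¹, ?_⟩
  intro i j m
  have e2 : (((Units.map (RingHom.mapMatrix (PowerSeries.map σ)).toMonoidHom (u⁻¹))⁻¹ :
      GL (Fin 5) (PowerSeries k')) : Matrix (Fin 5) (Fin 5) (PowerSeries k'))
      = F.map (PowerSeries.map σ) := by
    rw [map_inv, inv_inv, Units.coe_map]
    simp only [RingHom.toMonoidHom_eq_coe, MonoidHom.coe_coe, RingHom.mapMatrix_apply]
    rw [hu]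
  have e3 : ((u⁻¹ : (Matrix (Fin 5) (Fin 5) (PowerSeries k'))ˣ) :
        Matrix (Fin 5) (Fin 5) (PowerSeries k')) *
      (!![1, 0, 0, 0, 0;
          0, 0, 1, PowerSeries.C (R := k') t, 0;
          0, PowerSeries.X, 0, 0, 0;
          0, 0, 0, 0, 1;
          0, 0, 0, PowerSeries.X, 0] : Matrix (Fin 5) (Fin 5) (PowerSeries k')) *
      F.map (PowerSeries.map σ) = B' := by
    rw [Matrix.mul_assoc, hkey, ← Matrix.mul_assoc, ← hu, Units.inv_mul, Matrix.one_mul]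
  rw [e2, e3]
  exact hvals i j m

set_option maxHeartbeats 2000000 in
set_option synthInstance.maxHeartbeats 1000000 in
/-- The specialization core of Lemma 3.2: for every `t ∈ k'` with `v(t) ≥ 0` there is
`h ∈ GL₅(k'[[ε]])` such that every `ε`-coefficient of every entry of
`h·x_t·σ(h)⁻¹ − b₂` has strictly positive valuation. -/
theorem statement5 (p r q : ℕ) [Fact p.Prime] (hr : 0 < r) (hq : q = p ^ r)
    (k : Type*) [Field k] [Algebra (GaloisField p r) k] [IsAlgClosure (GaloisField p r) k]
    (k' : Type*) [Field k'] [Algebra (LaurentSeries k) k'] [IsAlgClosure (LaurentSeries k) k']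
    (π : k') (hπ : π = algebraMap (LaurentSeries k) k' (HahnSeries.single (1 : ℤ) 1))
    (v : k' → WithTop ℚ)
    (hv0 : ∀ x : k', v x = ⊤ ↔ x = 0)
    (hvmul : ∀ x y : k', v (x * y) = v x + v y)
    (hvadd : ∀ x y : k', min (v x) (v y) ≤ v (x + y))
    (hvπ : v π = 1)
    (σ : k' →+* k') (hσ : ∀ a : k', σ a = a ^ q)
    (t : k') (ht : 0 ≤ v t) :
    ∃ h : GL (Fin 5) (PowerSeries k'),
      ∀ i j : Fin 5, ∀ m : ℕ,
        0 < v (PowerSeries.coeff (R := k') m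
          (((h : Matrix (Fin 5) (Fin 5) (PowerSeries k')) *
            (!![1, 0, 0, 0, 0;
                0, 0, 1, PowerSeries.C (R := k') t, 0;
                0, PowerSeries.X, 0, 0, 0;
                0, 0, 0, 0, 1;
                0, 0, 0, PowerSeries.X, 0] : Matrix (Fin 5) (Fin 5) (PowerSeries k')) *
            (((Units.map (RingHom.mapMatrix (PowerSeries.map σ)).toMonoidHom h)⁻¹ :
                GL (Fin 5) (PowerSeries k')) : Matrix (Fin 5) (Fin 5) (PowerSeries k')) -
            (!![0, 1, 0, 0, 0;
                0, 0, 1, 0, 0;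
                PowerSeries.X, 0, 0, 0, 0;
                0, 0, 0, 0, 1;
                0, 0, 0, PowerSeries.X, 0] : Matrix (Fin 5) (Fin 5) (PowerSeries k'))) i j)) := by
  classical
  haveI : IsAlgClosed k' := IsAlgClosure.isAlgClosed (LaurentSeries k)
  -- basic numerics
  have hp : p.Prime := Fact.out
  have hq2 : 2 ≤ q := by
    rw [hq]
    calc 2 ≤ p := hp.two_le
    _ ≤ p ^ r := Nat.le_self_pow hr.ne' p
  have h32 : q * q < q * q * q := by nlinarith
  have h1qq : 1 < q * q := by nlinarith
  -- basic valuation facts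
  have hπ0 : π ≠ 0 := by
    intro h
    have h2 : v π = ⊤ := (hv0 π).mpr h
    rw [hvπ] at h2
    exact (by simp : (1 : WithTop ℚ) ≠ ⊤) h2
  have hv1 : v 1 = 0 := by
    have hne : v (1 : k') ≠ ⊤ := by rw [Ne, hv0]; exact one_ne_zero
    have h := hvmul 1 1
    rw [mul_one] at h
    lift v (1 : k') to ℚ using hne with a ha
    have h2 : a = a + a := by exact_mod_cast h
    have h3 : a = 0 := by linarith
    exact_mod_cast congrArg (fun x : ℚ => (x : WithTop ℚ)) h3
  have hvinv : ∀ x : k', x ≠ 0 → v x + v x⁻¹ = 0 := by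
    intro x hx
    have h := hvmul x x⁻¹
    rw [mul_inv_cancel₀ hx, hv1] at h
    exact h.symm
  have hvneg1 : v (-1 : k') = 0 := by
    have hne : v (-1 : k') ≠ ⊤ := by rw [Ne, hv0]; exact neg_ne_zero.mpr one_ne_zero
    have h := hvmul (-1) (-1)
    rw [neg_mul_neg, one_mul, hv1] at h
    lift v (-1 : k') to ℚ using hne with a ha
    have h2 : (0 : ℚ) = a + a := by exact_mod_cast h
    have h3 : a = 0 := by linarith
    exact_mod_cast congrArg (fun x : ℚ => (x : WithTop ℚ)) h3
  have hvπinv : v (π⁻¹ : k') = ((-1 : ℚ) : WithTop ℚ) := by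
    have h := hvinv π hπ0
    rw [hvπ] at h
    have hne : v (π⁻¹ : k') ≠ ⊤ := by rw [Ne, hv0]; exact inv_ne_zero hπ0
    lift v (π⁻¹ : k') to ℚ using hne with a ha
    have h2 : (1 : ℚ) + a = 0 := by exact_mod_cast h
    have h3 : a = -1 := by linarith
    exact_mod_cast congrArg (fun x : ℚ => (x : WithTop ℚ)) h3
  have hvnπinv : v (-π⁻¹ : k') = ((-1 : ℚ) : WithTop ℚ) := by
    have h : (-π⁻¹ : k') = (-1) * π⁻¹ := by ring
    rw [h, hvmul, hvneg1, hvπinv, zero_add]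
  have hvtop : (0 : WithTop ℚ) < v (0 : k') := by
    rw [(hv0 0).mpr rfl]
    exact_mod_cast WithTop.coe_lt_top (0 : ℚ)
  have hvpi : (0 : WithTop ℚ) < v π := by
    rw [hvπ]
    exact_mod_cast (zero_lt_one : (0:ℚ) < 1)
  have hvpow : ∀ (z : k') (c : ℚ), v z = (c : WithTop ℚ) →
      ∀ n : ℕ, v (z ^ n) = (((n : ℚ) * c : ℚ) : WithTop ℚ) := by
    intro z c hz n
    induction n with
    | zero => simpa using hv1
    | succ n ih =>
        rw [pow_succ, hvmul, ih, hz, ← WithTop.coe_add]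
        congr 1
        push_cast
        ring
  -- root-finding in the algebraically closed field k'
  have key : ∀ (w β : k') (N M : ℕ), M < N → ∃ z : k', z ^ N = w * z ^ M + β := by
    intro w β N M hMN
    have h0N : N ≠ 0 := by omega
    have hlt : (Polynomial.C w * Polynomial.X ^ M + Polynomial.C β : Polynomial k').degree <
        (Polynomial.X ^ N : Polynomial k').degree := by
      rw [Polynomial.degree_X_pow]
      refine lt_of_le_of_lt (Polynomial.degree_add_le _ _) (max_lt ?_ ?_)
      · exact lt_of_le_of_lt (Polynomial.degree_C_mul_X_pow_le _ _) (by exact_mod_cast hMN)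
      · exact lt_of_le_of_lt Polynomial.degree_C_le
          (by exact_mod_cast Nat.pos_of_ne_zero h0N)
    have hdeg : (Polynomial.X ^ N -
        (Polynomial.C w * Polynomial.X ^ M + Polynomial.C β) : Polynomial k').degree ≠ 0 := by
      rw [Polynomial.degree_sub_eq_left_of_degree_lt hlt, Polynomial.degree_X_pow]
      exact_mod_cast h0N
    obtain ⟨z, hz⟩ := IsAlgClosed.exists_root _ hdeg
    refine ⟨z, ?_⟩
    have h2 := hz
    simp only [Polynomial.IsRoot, Polynomial.eval_sub, Polynomial.eval_add, Polynomial.eval_mul,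
      Polynomial.eval_pow, Polynomial.eval_X, Polynomial.eval_C] at h2
    exact sub_eq_zero.mp h2
  have key2 : ∀ β : k', ∃ z : k', π * z ^ (q*q) + z = β := by
    intro β
    obtain ⟨z, hz⟩ := key (-π⁻¹) (π⁻¹ * β) (q*q) 1 h1qq
    refine ⟨z, ?_⟩
    rw [pow_one] at hz
    rw [hz]
    have h2 : π * (-π⁻¹ * z + π⁻¹ * β) + z = -(π * π⁻¹) * z + (π * π⁻¹) * β + z := by ring
    rw [h2, mul_inv_cancel₀ hπ0]
    ring
  have key3 : ∀ β : k', ∃ z : k', z ^ (q*q) = z + β := by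
    intro β
    obtain ⟨z, hz⟩ := key 1 β (q*q) 1 h1qq
    exact ⟨z, by rw [hz, pow_one, one_mul]⟩
  have key4 : ∀ β : k', ∃ z : k', z ^ (q*q) = β := by
    intro β
    obtain ⟨z, hz⟩ := key 0 β (q*q) 0 (by omega)
    exact ⟨z, by rw [hz, zero_mul, zero_add]⟩
  -- the sequence x
  obtain ⟨x0, hx0⟩ := key 0 π (q*q*q - q*q) 0 (by omega)
  rw [zero_mul, zero_add] at hx0
  have hx0ne : x0 ≠ 0 := by
    intro h
    rw [h, zero_pow (by omega : q*q*q - q*q ≠ 0)] at hx0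
    exact hπ0 hx0.symm
  have hx0eq : x0 ^ (q*q*q) = π * x0 ^ (q*q) := by
    have hsplit : q*q*q = (q*q*q - q*q) + (q*q) := by omega
    calc x0 ^ (q*q*q) = x0 ^ ((q*q*q - q*q) + (q*q)) := by rw [← hsplit]
    _ = x0 ^ (q*q*q - q*q) * x0 ^ (q*q) := pow_add _ _ _
    _ = π * x0 ^ (q*q) := by rw [hx0]
  let xs : ℕ → k' := fun n => Nat.rec x0 (fun _ z => (key π z (q*q*q) (q*q) h32).choose) n
  have hxs0 : xs 0 = x0 := rfl
  have hxsS : ∀ n : ℕ, (xs (n+1)) ^ (q*q*q) = π * (xs (n+1)) ^ (q*q) + xs n := by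
    intro n
    exact (key π (xs n) (q*q*q) (q*q) h32).choose_spec
  -- b0
  obtain ⟨b0, hb0⟩ := key 0 (-π⁻¹) (q*q - 1) 0 (by omega)
  rw [zero_mul, zero_add] at hb0
  have hb0ne : b0 ≠ 0 := by
    intro h
    rw [h, zero_pow (by omega : q*q - 1 ≠ 0)] at hb0
    exact inv_ne_zero hπ0 (neg_eq_zero.mp hb0.symm)
  have hb0eq : π * b0 ^ (q*q) + b0 = 0 := by
    have hsplit : q*q = (q*q - 1) + 1 := by omega
    rw [hsplit, pow_add, pow_one, hb0]
    have h2 : π * (-π⁻¹ * b0) + b0 = -(π * π⁻¹) * b0 + b0 := by ring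
    rw [h2, mul_inv_cancel₀ hπ0]
    ring
  -- sequences a and b
  let ab : ℕ → k' × k' := fun n => Nat.rec ((key2 (b0 ^ (q*q*q))).choose, b0)
    (fun _ pr => ((key2 (((key2 (pr.1 ^ (q*q*q))).choose) ^ (q*q*q))).choose,
                  (key2 (pr.1 ^ (q*q*q))).choose)) n
  let as : ℕ → k' := fun n => (ab n).1
  let bs : ℕ → k' := fun n => (ab n).2
  have hbs0 : bs 0 = b0 := rfl
  have hBrec : ∀ n : ℕ, π * (bs (n+1)) ^ (q*q) + bs (n+1) = (as n) ^ (q*q*q) := by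
    intro n
    exact (key2 ((as n) ^ (q*q*q))).choose_spec
  have hABrec : ∀ n : ℕ, π * (as n) ^ (q*q) + as n = (bs n) ^ (q*q*q) := by
    intro n
    cases n with
    | zero => exact (key2 (b0 ^ (q*q*q))).choose_spec
    | succ n => exact (key2 ((bs (n+1)) ^ (q*q*q))).choose_spec
  -- the constant T0
  let T0 : k' := t * (b0 ^ q)⁻¹
  -- sequences g, c, d
  let gs : ℕ → k' := fun n => Nat.rec ((key4 (T0 * x0 ^ q)).choose)
    (fun n z => (key4 (T0 * (xs (n+1)) ^ q + z)).choose) n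
  have hg0 : (gs 0) ^ (q*q) = T0 * (xs 0) ^ q := (key4 (T0 * x0 ^ q)).choose_spec
  have hgS : ∀ n, (gs (n+1)) ^ (q*q) = T0 * (xs (n+1)) ^ q + gs n := by
    intro n
    exact (key4 (T0 * (xs (n+1)) ^ q + gs n)).choose_spec
  let cs : ℕ → k' := fun n => (key3 (T0 * (bs (n+1)) ^ q)).choose
  have hcs : ∀ n, (cs n) ^ (q*q) = cs n + T0 * (bs (n+1)) ^ q := by
    intro n
    exact (key3 (T0 * (bs (n+1)) ^ q)).choose_spec
  let ds : ℕ → k' := fun n => (key3 (T0 * (as n) ^ q)).choose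
  have hds : ∀ n, (ds n) ^ (q*q) = ds n + T0 * (as n) ^ q := by
    intro n
    exact (key3 (T0 * (as n) ^ q)).choose_spec
  have hc0 : t = T0 * bs 0 ^ q := by
    rw [hbs0, show T0 = t * (b0 ^ q)⁻¹ from rfl, mul_assoc,
      inv_mul_cancel₀ (pow_ne_zero q hb0ne), mul_one]
  -- the key matrix identity
  have hkey := Statement5.keyid q σ hσ π t T0 xs as bs cs ds gs hx0eq hxsS
    (by rw [hbs0]; exact hb0eq) hBrec hABrec hg0 hgS hc0 hcs hds
  -- invertibility
  obtain ⟨u, hu⟩ := Statement5.detunit q xs as bs cs ds gs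
    (by rw [hxs0]; exact hx0ne) (by rw [hbs0]; exact hb0ne)
  -- positivity of v T0
  have hvT0 : (0 : WithTop ℚ) < v T0 := by
    by_cases hteq : t = 0
    · rw [show T0 = t * (b0 ^ q)⁻¹ from rfl, hteq, zero_mul]
      exact hvtop
    · have hvb0ne : v b0 ≠ ⊤ := by rw [Ne, hv0]; exact hb0ne
      lift v b0 to ℚ using hvb0ne with mb hmb
      have h1 : v (b0 ^ (q*q-1)) = ((((q*q-1 : ℕ) : ℚ) * mb : ℚ) : WithTop ℚ) :=
        hvpow b0 mb hmb.symm (q*q-1)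
      rw [hb0, hvnπinv] at h1
      have h2 : ((q*q-1 : ℕ) : ℚ) * mb = -1 := by exact_mod_cast h1.symm
      have hNge : (1 : ℚ) ≤ ((q*q-1 : ℕ) : ℚ) := by exact_mod_cast (by omega : 1 ≤ q*q-1)
      have hmbneg : mb < 0 := by nlinarith
      have hbinvne : (b0 : k')⁻¹ ≠ 0 := inv_ne_zero hb0ne
      have hvbinvne : v b0⁻¹ ≠ ⊤ := by rw [Ne, hv0]; exact hbinvne
      lift v b0⁻¹ to ℚ using hvbinvne with mi hmi
      have h3 : v b0 + v b0⁻¹ = 0 := hvinv b0 hb0ne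
      rw [← hmb, ← hmi] at h3
      have h4 : mb + mi = 0 := by exact_mod_cast h3
      have hmipos : 0 < mi := by linarith
      have h5 : v ((b0 ^ q)⁻¹) = (((q : ℚ) * mi : ℚ) : WithTop ℚ) := by
        rw [← inv_pow]
        exact hvpow b0⁻¹ mi hmi.symm q
      rw [show T0 = t * (b0 ^ q)⁻¹ from rfl, hvmul, h5]
      have hvtne : v t ≠ ⊤ := by rw [Ne, hv0]; exact hteq
      lift v t to ℚ using hvtne with mt hmt
      have hmt0 : (0 : ℚ) ≤ mt := by exact_mod_cast ht
      rw [← WithTop.coe_add]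
      have hqq : (1 : ℚ) ≤ (q : ℚ) := by exact_mod_cast (by omega : 1 ≤ q)
      exact_mod_cast (by nlinarith : (0:ℚ) < mt + (q : ℚ) * mi)
  -- the entries of the difference matrix all have positive valuation
  have hdiff : Statement5.Bp π T0 -
      (!![0, 1, 0, 0, 0;
          0, 0, 1, 0, 0;
          PowerSeries.X, 0, 0, 0, 0;
          0, 0, 0, 0, 1;
          0, 0, 0, PowerSeries.X, 0] : Matrix (Fin 5) (Fin 5) (PowerSeries k')) =
      !![PowerSeries.C (R := k') π, 0, 0, 0, 0;
         0, 0, 0, PowerSeries.C (R := k') T0, 0;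
         0, 0, 0, 0, 0;
         0, 0, 0, 0, 0;
         0, 0, 0, 0, 0] := by
    simp only [Statement5.Bp]
    rw [Statement5.sub_fin_five]
    apply Statement5.mat5_eq <;> first | rw [sub_self] | rw [sub_zero] | rfl
  have hvals : ∀ i j : Fin 5, ∀ m : ℕ, 0 < v (PowerSeries.coeff (R := k') m ((Statement5.Bp π T0 -
      (!![0, 1, 0, 0, 0;
          0, 0, 1, 0, 0;
          PowerSeries.X, 0, 0, 0, 0;
          0, 0, 0, 0, 1;
          0, 0, 0, PowerSeries.X, 0] :
        Matrix (Fin 5) (Fin 5) (PowerSeries k'))) i j)) := by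
    intro i j m
    rw [hdiff]
    fin_cases i <;> fin_cases j <;> rcases m with _ | m <;>
      simp [PowerSeries.coeff_C] <;>
      first | exact hvpi | exact hvT0 | exact hvtop
  exact Statement5.glue v σ t (Statement5.Fm q xs as bs cs ds gs) (Statement5.Bp π T0) u hu
    hkey hvals
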